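/- Every bidemocratic semi-normalized basis satisfies Property (C): there is a constant such that for every x ∈ X, every finite A ⊂ supp(x), and every sign choice ε, min_{j∈A}|e_j*(x)|·‖1_{εA}‖ ≤ C‖x‖. -/

import Mathlib

open Filter

theorem stmt12 {X : Type*} [NormedAddCommGroup X] [NormedSpace ℝ X] [CompleteSpace X]
    (e : ℕ → X) (f : ℕ → X →L[ℝ] ℝ) (c₁ c₂ : ℝ) (hc₁ : 0 < c₁)
    (hsn : ∀ n, c₁ ≤ ‖e n‖ ∧ ‖e n‖ ≤ c₂ ∧ c₁ ≤ ‖f n‖ ∧ ‖f n‖ ≤ c₂)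
    (hbi : ∀ i j, f i (e j) = if i = j then (1:ℝ) else 0)
    (hexp : ∀ x : X, Tendsto (fun m => ∑ i ∈ Finset.range m, f i x • e i) atTop (nhds x))
    (Cb : ℝ) (hCb : 1 ≤ Cb)
    (hbd : ∀ (A : Finset ℕ) (ε η : ℕ → ℝ),
      (∀ n, ε n = 1 ∨ ε n = -1) → (∀ n, η n = 1 ∨ η n = -1) →
      ‖∑ i ∈ A, ε i • e i‖ * ‖∑ i ∈ A, η i • f i‖ ≤ Cb * A.card) :
    ∃ C : ℝ, ∀ (x : X) (A : Finset ℕ), (∀ n ∈ A, f n x ≠ 0) →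
      ∀ (ε : ℕ → ℝ), (∀ n, ε n = 1 ∨ ε n = -1) →
      ∀ t : ℝ, 0 ≤ t → (∀ j ∈ A, t ≤ |f j x|) →
      t * ‖∑ j ∈ A, ε j • e j‖ ≤ C * ‖x‖ := by
  refine ⟨Cb, fun x A hA ε hε t ht htj => ?_⟩
  rcases A.eq_empty_or_nonempty with rfl | hAne
  · simp only [Finset.sum_empty, norm_zero, mul_zero]
    positivity
  set η : ℕ → ℝ := fun n => if f n x < 0 then -1 else 1 with hηdef
  have hη : ∀ n, η n = 1 ∨ η n = -1 := by
    intro n; by_cases h : f n x < 0 <;> simp [hηdef, h]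
  have hηmul : ∀ n, η n * f n x = |f n x| := by
    intro n
    by_cases h : f n x < 0
    · simp [hηdef, h, abs_of_neg h]
    · simp [hηdef, h, abs_of_nonneg (not_lt.mp h)]
  have key : t * A.card ≤ ‖∑ i ∈ A, η i • f i‖ * ‖x‖ := by
    calc t * A.card = ∑ j ∈ A, t := by rw [Finset.sum_const, nsmul_eq_mul, mul_comm]
    _ ≤ ∑ j ∈ A, |f j x| := Finset.sum_le_sum fun j hj => htj j hj
    _ = (∑ i ∈ A, η i • f i) x := by
        rw [ContinuousLinearMap.sum_apply]
        exact (Finset.sum_congr rfl fun j _ => by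
          simp [ContinuousLinearMap.smul_apply, smul_eq_mul, hηmul j]).symm
    _ ≤ |(∑ i ∈ A, η i • f i) x| := le_abs_self _
    _ ≤ ‖∑ i ∈ A, η i • f i‖ * ‖x‖ := (∑ i ∈ A, η i • f i).le_opNorm x
  have hcard : (0:ℝ) < A.card := by exact_mod_cast Finset.card_pos.mpr hAne
  rw [← mul_le_mul_iff_of_pos_right hcard]
  calc t * ‖∑ j ∈ A, ε j • e j‖ * A.card
      = ‖∑ j ∈ A, ε j • e j‖ * (t * A.card) := by ring
    _ ≤ ‖∑ j ∈ A, ε j • e j‖ * (‖∑ i ∈ A, η i • f i‖ * ‖x‖) := by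
        exact mul_le_mul_of_nonneg_left key (norm_nonneg _)
    _ = ‖∑ j ∈ A, ε j • e j‖ * ‖∑ i ∈ A, η i • f i‖ * ‖x‖ := by ring
    _ ≤ Cb * A.card * ‖x‖ := by
        exact mul_le_mul_of_nonneg_right (hbd A ε η hε hη) (norm_nonneg _)
    _ = Cb * ‖x‖ * A.card := by ring
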